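/- The Ligon-Schaaf map transforms the Runge-Lenz vector: with notation as above, x₄ ỹ - y₄ x̃ = ν (q/|q| - (1/μ) p × (q × p)), where x = A sinθ + B cosθ and y = -ν A cosθ + ν B sinθ, x₄, y₄ are the fourth components and x̃, ỹ the spatial parts. -/

import Mathlib

open Finset Matrix

private lemma key_scalar (μ ν s P D qi pi : ℝ) (hμ : μ ≠ 0) (hν : ν ≠ 0) (hs : s ≠ 0)
    (hk : ν^2 * (2/s - P/μ) = μ) :
    (1/ν * D) * (1/ν * s * pi) - ((1/μ)*P*s - 1)*(qi/s - (1/μ)*D*pi)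
      = s⁻¹*qi - μ⁻¹*(P*qi - D*pi) := by
  field_simp at hk ⊢
  linear_combination (-(s * D * pi)) * hk

/-- The Ligon-Schaaf map transforms the Runge-Lenz vector:
`x₄ ỹ - y₄ x̃ = ν (q/|q| - (1/μ) p × (q × p))`. -/
theorem stmt13 (q p : Fin 3 → ℝ) (hq : q ≠ 0) (μ H ν θ : ℝ) (hμ : 0 < μ)
    (hH : H = (∑ i, p i ^ 2) / (2 * μ) - 1 / Real.sqrt (∑ i, q i ^ 2))
    (hHneg : H < 0)
    (hν : ν = Real.sqrt (μ / (-2 * H)))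
    (At Bt : Fin 3 → ℝ) (A₄ B₄ : ℝ)
    (hAt : At = fun i => q i / Real.sqrt (∑ j, q j ^ 2) - (1 / μ) * (∑ j, q j * p j) * p i)
    (hA₄ : A₄ = (1 / ν) * ∑ j, q j * p j)
    (hBt : Bt = fun i => (1 / ν) * Real.sqrt (∑ j, q j ^ 2) * p i)
    (hB₄ : B₄ = (1 / μ) * (∑ j, p j ^ 2) * Real.sqrt (∑ j, q j ^ 2) - 1)
    (xt yt : Fin 3 → ℝ) (x₄ y₄ : ℝ)
    (hxt : xt = Real.sin θ • At + Real.cos θ • Bt)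
    (hx₄ : x₄ = A₄ * Real.sin θ + B₄ * Real.cos θ)
    (hyt : yt = -(ν * Real.cos θ) • At + (ν * Real.sin θ) • Bt)
    (hy₄ : y₄ = -(ν * A₄) * Real.cos θ + (ν * B₄) * Real.sin θ) :
    x₄ • yt - y₄ • xt
      = ν • ((Real.sqrt (∑ j, q j ^ 2))⁻¹ • q - μ⁻¹ • (p ⨯₃ (q ⨯₃ p))) := by
  set s := Real.sqrt (∑ j, q j ^ 2) with hsdef
  set P := ∑ j, p j ^ 2 with hPdef
  set D := ∑ j, q j * p j with hDdef
  have hsum : 0 < ∑ j, q j ^ 2 := by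
    obtain ⟨i, hi⟩ := Function.ne_iff.mp hq
    exact Finset.sum_pos' (fun j _ => sq_nonneg _)
      ⟨i, Finset.mem_univ i, (sq_nonneg _).lt_of_ne (Ne.symm (pow_ne_zero 2 hi))⟩
  have hs : 0 < s := Real.sqrt_pos.2 hsum
  have h2H : 0 < -2 * H := by linarith
  have hνpos : 0 < ν := by
    rw [hν]; exact Real.sqrt_pos.2 (div_pos hμ h2H)
  have hν2 : ν ^ 2 = μ / (-2 * H) := by
    rw [hν, Real.sq_sqrt (le_of_lt (div_pos hμ h2H))]
  have hHs : 2 / s - P / μ = -2 * H := by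
    rw [hH]; field_simp; ring
  have hk : ν ^ 2 * (2 / s - P / μ) = μ := by
    rw [hHs, hν2, div_mul_cancel₀ _ (ne_of_gt h2H)]
  have hcross : ∀ i, (p ⨯₃ (q ⨯₃ p)) i = P * q i - D * p i := by
    intro i
    rw [hPdef, hDdef]
    fin_cases i <;> simp [crossProduct, Fin.sum_univ_three] <;> ring
  have hmain : ∀ i, A₄ * Bt i - B₄ * At i = s⁻¹ * q i - μ⁻¹ * (p ⨯₃ (q ⨯₃ p)) i := by
    intro i
    rw [hAt, hBt, hA₄, hB₄, hcross i]
    exact key_scalar μ ν s P D (q i) (p i) (ne_of_gt hμ) (ne_of_gt hνpos)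
      (ne_of_gt hs) hk
  funext i
  have h1 := hmain i
  simp only [hxt, hyt, hx₄, hy₄, Pi.sub_apply, Pi.add_apply, Pi.smul_apply,
    smul_eq_mul, Pi.neg_apply]
  linear_combination (ν * (A₄ * Bt i - B₄ * At i)) * (Real.sin_sq_add_cos_sq θ) + ν * h1
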